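/- Let α > 0 and set φ_α(ξ) = ξ^{2(α+1)} − ξ². There exists a constant C > 0 such that for every μ ≥ 1 the improper Riemann integral lim_{R→∞} ∫_{1}^{R} e^{i μ^{1+1/α} φ_α(ξ)} dξ exists and its absolute value is at most C μ^{−1−1/α}; moreover, μ ↦ lim_{R→∞} ∫_{1}^{R} e^{i μ^{1+1/α} φ_α(ξ)} dξ is continuous on [1, ∞). -/

import Mathlib

open MeasureTheory Filter

/-- The rescaled phase `φ_α(ξ) = ξ^{2(α+1)} - ξ²`. -/
noncomputable def phase (α ξ : ℝ) : ℝ := ξ ^ (2 * (α + 1)) - ξ ^ 2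

namespace FarFieldAux

noncomputable def Dph (α ξ : ℝ) : ℝ := 2 * (α + 1) * ξ ^ (2 * (α + 1) - 1) - 2 * ξ

noncomputable def Dph2 (α ξ : ℝ) : ℝ :=
  2 * (α + 1) * ((2 * (α + 1) - 1) * ξ ^ (2 * (α + 1) - 1 - 1)) - 2

noncomputable def hd (α ξ : ℝ) : ℝ := -Dph2 α ξ / (Dph α ξ) ^ 2

lemma hasDerivAt_phase (α : ℝ) {ξ : ℝ} (hξ : 0 < ξ) :
    HasDerivAt (phase α) (Dph α ξ) ξ := by
  have h1 := Real.hasDerivAt_rpow_const (p := 2 * (α + 1)) (Or.inl hξ.ne')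
  have h2 := hasDerivAt_pow 2 ξ
  refine HasDerivAt.congr_deriv (h1.sub h2) ?_
  simp [Dph]

lemma hasDerivAt_Dph (α : ℝ) {ξ : ℝ} (hξ : 0 < ξ) :
    HasDerivAt (Dph α) (Dph2 α ξ) ξ := by
  have h1 := (Real.hasDerivAt_rpow_const (p := 2 * (α + 1) - 1) (Or.inl hξ.ne')).const_mul
    (2 * (α + 1))
  have h2 := (hasDerivAt_id ξ).const_mul (2 : ℝ)
  refine HasDerivAt.congr_deriv (h1.sub h2) ?_
  simp [Dph2]

lemma Dph_lb (α : ℝ) (hα : 0 < α) {ξ : ℝ} (hξ : 1 ≤ ξ) : 2 * α * ξ ≤ Dph α ξ := by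
  have h1 : ξ ≤ ξ ^ (2 * (α + 1) - 1) := by
    calc ξ = ξ ^ (1 : ℝ) := (Real.rpow_one ξ).symm
    _ ≤ ξ ^ (2 * (α + 1) - 1) := Real.rpow_le_rpow_of_exponent_le hξ (by nlinarith)
  have : 0 < α + 1 := by linarith
  unfold Dph; nlinarith

lemma Dph_pos (α : ℝ) (hα : 0 < α) {ξ : ℝ} (hξ : 1 ≤ ξ) : 0 < Dph α ξ :=
  lt_of_lt_of_le (by positivity : (0:ℝ) < 2 * α * ξ) (Dph_lb α hα hξ)

lemma Dph2_pos (α : ℝ) (hα : 0 < α) {ξ : ℝ} (hξ : 1 ≤ ξ) : 0 < Dph2 α ξ := by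
  have h1 : (1 : ℝ) ≤ ξ ^ (2 * (α + 1) - 1 - 1) :=
    Real.one_le_rpow hξ (by nlinarith)
  have h2 : (2 * (α + 1) - 1) ≤ (2 * (α + 1) - 1) * ξ ^ (2 * (α + 1) - 1 - 1) :=
    le_mul_of_one_le_right (by nlinarith) h1
  unfold Dph2; nlinarith

lemma hd_nonpos (α : ℝ) (hα : 0 < α) {ξ : ℝ} (hξ : 1 ≤ ξ) : hd α ξ ≤ 0 := by
  have h1 := Dph2_pos α hα hξ
  have h2 := Dph_pos α hα hξ
  unfold hd
  apply div_nonpos_of_nonpos_of_nonneg (by linarith) (by positivity)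

lemma hasDerivAt_hinv (α : ℝ) (hα : 0 < α) {ξ : ℝ} (hξ : 1 ≤ ξ) :
    HasDerivAt (fun x => (Dph α x)⁻¹) (hd α ξ) ξ :=
  (hasDerivAt_Dph α (by linarith)).inv (Dph_pos α hα hξ).ne'

lemma Dph_one (α : ℝ) : Dph α 1 = 2 * α := by
  simp [Dph, Real.one_rpow]; ring

lemma phase_one (α : ℝ) : phase α 1 = 0 := by
  simp [phase, Real.one_rpow]

lemma tendsto_hinv (α : ℝ) (hα : 0 < α) :
    Tendsto (fun ξ => (Dph α ξ)⁻¹) atTop (nhds 0) := by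
  apply squeeze_zero' (g := fun ξ => (2 * α * ξ)⁻¹)
  · filter_upwards [eventually_ge_atTop (1:ℝ)] with ξ hξ
    exact inv_nonneg.2 (Dph_pos α hα hξ).le
  · filter_upwards [eventually_ge_atTop (1:ℝ)] with ξ hξ
    exact inv_anti₀ (by positivity) (Dph_lb α hα hξ)
  · apply Tendsto.inv_tendsto_atTop
    exact Tendsto.const_mul_atTop (by positivity) tendsto_id

end FarFieldAux

namespace FarFieldAux2
open FarFieldAux

lemma neg_hd_facts (α : ℝ) (hα : 0 < α) :
    IntegrableOn (fun ξ => -hd α ξ) (Set.Ioi 1) ∧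
    ∫ ξ in Set.Ioi (1:ℝ), -hd α ξ = (2 * α)⁻¹ := by
  have hderiv : ∀ x ∈ Set.Ici (1:ℝ), HasDerivAt (fun ξ => -(Dph α ξ)⁻¹) (-hd α x) x :=
    fun x hx => (hasDerivAt_hinv α hα hx).neg
  have hpos : ∀ x ∈ Set.Ioi (1:ℝ), 0 ≤ -hd α x :=
    fun x hx => neg_nonneg.2 (hd_nonpos α hα (le_of_lt hx))
  have hlim : Tendsto (fun ξ => -(Dph α ξ)⁻¹) atTop (nhds 0) := by
    simpa using (tendsto_hinv α hα).neg
  refine ⟨integrableOn_Ioi_deriv_of_nonneg' hderiv hpos hlim, ?_⟩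
  rw [integral_Ioi_of_hasDerivAt_of_nonneg' hderiv hpos hlim]
  simp [Dph_one]

lemma continuousAt_hd (α : ℝ) (hα : 0 < α) {ξ : ℝ} (hξ : 1 ≤ ξ) :
    ContinuousAt (hd α) ξ := by
  have h0 : ξ ≠ 0 := by intro h; rw [h] at hξ; linarith
  have hD : ContinuousAt (Dph α) ξ := (hasDerivAt_Dph α (by linarith)).continuousAt
  have hD2 : ContinuousAt (Dph2 α) ξ := by
    unfold Dph2
    exact (((Real.continuousAt_rpow_const ξ _ (Or.inl h0)).const_mul _).const_mul _).sub
      continuousAt_const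
  have hne : (Dph α ξ) ^ 2 ≠ 0 := pow_ne_zero _ (Dph_pos α hα hξ).ne'
  exact hD2.neg.div (hD.pow 2) hne

noncomputable def eph (α μ ξ : ℝ) : ℂ :=
  Complex.exp (Complex.I * ((μ ^ (1 + 1 / α) * phase α ξ : ℝ) : ℂ))

lemma continuousAt_eph (α μ : ℝ) {ξ : ℝ} (hξ : 0 < ξ) :
    ContinuousAt (fun x => eph α μ x) ξ := by
  have hph : ContinuousAt (phase α) ξ := (hasDerivAt_phase α hξ).continuousAt
  have h1 : ContinuousAt (fun x => ((μ ^ (1 + 1 / α) * phase α x : ℝ) : ℂ)) ξ :=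
    Complex.continuous_ofReal.continuousAt.comp (continuousAt_const.mul hph)
  exact (continuousAt_const.mul h1).cexp

lemma norm_eph (α μ ξ : ℝ) : ‖eph α μ ξ‖ = 1 := by
  rw [eph, Complex.norm_exp]
  simp

end FarFieldAux2

namespace Main
open FarFieldAux FarFieldAux2

noncomputable def gfun (α μ : ℝ) : ℂ :=
  -(Complex.I * ((μ ^ (1 + 1 / α) : ℝ) : ℂ))⁻¹ *
    ((((2 * α)⁻¹ : ℝ) : ℂ) + ∫ ξ in Set.Ioi (1 : ℝ), eph α μ ξ * ((hd α ξ : ℝ) : ℂ))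

lemma hasDerivAt_F (α lam : ℝ) (hα : 0 < α) (hlam : 0 < lam) {ξ : ℝ} (hξ : 1 ≤ ξ) :
    HasDerivAt (fun x => Complex.exp (Complex.I * ((lam * phase α x : ℝ) : ℂ)) *
        ((Complex.I * (lam : ℂ))⁻¹ * (((Dph α x)⁻¹ : ℝ) : ℂ)))
      (Complex.exp (Complex.I * ((lam * phase α ξ : ℝ) : ℂ)) +
        Complex.exp (Complex.I * ((lam * phase α ξ : ℝ) : ℂ)) *
          ((Complex.I * (lam : ℂ))⁻¹ * ((hd α ξ : ℝ) : ℂ))) ξ := by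
  have hξ0 : (0:ℝ) < ξ := lt_of_lt_of_le zero_lt_one hξ
  have hr : HasDerivAt (fun x => lam * phase α x) (lam * Dph α ξ) ξ :=
    (hasDerivAt_phase α hξ0).const_mul _
  have he := (hr.ofReal_comp.const_mul Complex.I).cexp
  have hh : HasDerivAt (fun x => (Complex.I * (lam : ℂ))⁻¹ * (((Dph α x)⁻¹ : ℝ) : ℂ))
      ((Complex.I * (lam : ℂ))⁻¹ * ((hd α ξ : ℝ) : ℂ)) ξ :=
    ((hasDerivAt_hinv α hα hξ).ofReal_comp).const_mul _
  have := he.mul hh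
  refine HasDerivAt.congr_deriv this ?_
  have hDne : ((Dph α ξ : ℝ) : ℂ) ≠ 0 := by exact_mod_cast (Dph_pos α hα hξ).ne'
  have hlamne : ((lam : ℝ) : ℂ) ≠ 0 := by exact_mod_cast hlam.ne'
  push_cast
  field_simp

lemma integrableOn_eph_hd (α μ : ℝ) (hα : 0 < α) :
    IntegrableOn (fun ξ => eph α μ ξ * ((hd α ξ : ℝ) : ℂ)) (Set.Ioi 1) := by
  have hmeas : AEStronglyMeasurable (fun ξ => eph α μ ξ * ((hd α ξ : ℝ) : ℂ))
      (volume.restrict (Set.Ioi 1)) := by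
    apply ContinuousOn.aestronglyMeasurable _ measurableSet_Ioi
    intro x hx
    exact ((continuousAt_eph α μ (lt_trans zero_lt_one hx)).mul
      (Complex.continuous_ofReal.continuousAt.comp (continuousAt_hd α hα (le_of_lt hx)))).continuousWithinAt
  refine Integrable.mono' (neg_hd_facts α hα).1 hmeas ?_
  rw [ae_restrict_iff' measurableSet_Ioi]
  refine ae_of_all _ fun ξ hξ => ?_
  rw [norm_mul, norm_eph, one_mul, Complex.norm_real, Real.norm_eq_abs,
    abs_of_nonpos (hd_nonpos α hα (le_of_lt hξ))]

lemma tendsto_gfun (α μ : ℝ) (hα : 0 < α) (hμ : 1 ≤ μ) :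
    Tendsto (fun R : ℝ => ∫ ξ in (1:ℝ)..R, eph α μ ξ) atTop (nhds (gfun α μ)) := by
  have hlam1 : 1 ≤ μ ^ (1 + 1/α) := Real.one_le_rpow hμ (by positivity)
  have hlampos : (0:ℝ) < μ ^ (1 + 1/α) := lt_of_lt_of_le zero_lt_one hlam1
  have hlamC : (Complex.I * ((μ ^ (1 + 1/α) : ℝ) : ℂ)) ≠ 0 :=
    mul_ne_zero Complex.I_ne_zero (by exact_mod_cast hlampos.ne')
  set c : ℂ := (Complex.I * ((μ ^ (1 + 1/α) : ℝ) : ℂ))⁻¹ with hc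
  set F : ℝ → ℂ := fun ξ => eph α μ ξ * (c * (((Dph α ξ)⁻¹ : ℝ) : ℂ)) with hF
  have hFderiv : ∀ ξ ∈ Set.Ici (1:ℝ),
      HasDerivAt F (eph α μ ξ + eph α μ ξ * (c * ((hd α ξ : ℝ) : ℂ))) ξ := by
    intro ξ hξ
    exact hasDerivAt_F α (μ ^ (1 + 1/α)) hα hlampos hξ
  have key : ∀ R : ℝ, 1 ≤ R →
      ∫ ξ in (1:ℝ)..R, eph α μ ξ =
        (F R - F 1) - c * ∫ ξ in (1:ℝ)..R, eph α μ ξ * ((hd α ξ : ℝ) : ℂ) := by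
    intro R hR
    have hsub : ∀ x ∈ Set.uIcc (1:ℝ) R, 1 ≤ x := by
      rw [Set.uIcc_of_le hR]; exact fun x hx => hx.1
    have hcont1 : ContinuousOn (fun ξ => eph α μ ξ) (Set.uIcc 1 R) := fun x hx =>
      (continuousAt_eph α μ (lt_of_lt_of_le zero_lt_one (hsub x hx))).continuousWithinAt
    have hconthd : ContinuousOn (fun ξ => ((hd α ξ : ℝ) : ℂ)) (Set.uIcc 1 R) := fun x hx =>
      (Complex.continuous_ofReal.continuousAt.comp (continuousAt_hd α hα (hsub x hx))).continuousWithinAt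
    have hcont2 : ContinuousOn (fun ξ => eph α μ ξ * ((hd α ξ : ℝ) : ℂ)) (Set.uIcc 1 R) :=
      hcont1.mul hconthd
    have hcont3 : ContinuousOn
        (fun ξ => eph α μ ξ + eph α μ ξ * (c * ((hd α ξ : ℝ) : ℂ))) (Set.uIcc 1 R) :=
      hcont1.add (hcont1.mul (continuousOn_const.mul hconthd))
    have hFTC := intervalIntegral.integral_eq_sub_of_hasDerivAt
      (fun x hx => hFderiv x (hsub x hx)) (hcont3.intervalIntegrable)
    have hsplit : ∫ ξ in (1:ℝ)..R, (eph α μ ξ + eph α μ ξ * (c * ((hd α ξ : ℝ) : ℂ))) =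
        (∫ ξ in (1:ℝ)..R, eph α μ ξ) +
          c * ∫ ξ in (1:ℝ)..R, eph α μ ξ * ((hd α ξ : ℝ) : ℂ) := by
      rw [intervalIntegral.integral_add hcont1.intervalIntegrable
        ((show ContinuousOn (fun ξ => eph α μ ξ * (c * ((hd α ξ : ℝ) : ℂ))) (Set.uIcc 1 R) from
          hcont1.mul (continuousOn_const.mul hconthd)).intervalIntegrable)]
      congr 1
      rw [← intervalIntegral.integral_const_mul]
      congr 1; ext ξ; ring
    rw [hsplit] at hFTC
    linear_combination hFTC
  have hJ := intervalIntegral_tendsto_integral_Ioi 1 (integrableOn_eph_hd α μ hα)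
    (tendsto_id (α := ℝ))
  have hF0 : Tendsto F atTop (nhds 0) := by
    rw [tendsto_zero_iff_norm_tendsto_zero]
    apply squeeze_zero' (g := fun ξ => ‖c‖ * (Dph α ξ)⁻¹)
    · filter_upwards with ξ using norm_nonneg _
    · filter_upwards [eventually_ge_atTop (1:ℝ)] with ξ hξ
      rw [hF]
      simp only [norm_mul, norm_eph, one_mul, Complex.norm_real, Real.norm_eq_abs]
      rw [abs_of_nonneg (inv_nonneg.2 (Dph_pos α hα hξ).le)]
    · simpa using (tendsto_hinv α hα).const_mul ‖c‖
  have hcomb : Tendsto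
      (fun R => (F R - F 1) - c * ∫ ξ in (1:ℝ)..R, eph α μ ξ * ((hd α ξ : ℝ) : ℂ))
      atTop (nhds ((0 - F 1) - c * ∫ ξ in Set.Ioi (1:ℝ), eph α μ ξ * ((hd α ξ : ℝ) : ℂ))) :=
    (hF0.sub tendsto_const_nhds).sub (hJ.const_mul c)
  have hgf : gfun α μ = (0 - F 1) - c * ∫ ξ in Set.Ioi (1:ℝ), eph α μ ξ * ((hd α ξ : ℝ) : ℂ) := by
    have h1 : eph α μ 1 = 1 := by simp [eph, phase_one]
    rw [gfun, hF]
    simp only [h1, one_mul, Dph_one, ← hc]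
    ring
  rw [hgf]
  apply hcomb.congr'
  filter_upwards [eventually_ge_atTop (1:ℝ)] with R hR
  exact (key R hR).symm

lemma norm_gfun_le (α μ : ℝ) (hα : 0 < α) (hμ : 1 ≤ μ) :
    ‖gfun α μ‖ ≤ α⁻¹ * μ ^ (-1 - 1/α : ℝ) := by
  have hlam1 : 1 ≤ μ ^ (1 + 1/α) := Real.one_le_rpow hμ (by positivity)
  have hlampos : (0:ℝ) < μ ^ (1 + 1/α) := lt_of_lt_of_le zero_lt_one hlam1
  have hJ : ‖∫ ξ in Set.Ioi (1:ℝ), eph α μ ξ * ((hd α ξ : ℝ) : ℂ)‖ ≤ (2*α)⁻¹ := by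
    rw [← (neg_hd_facts α hα).2]
    apply norm_integral_le_of_norm_le (neg_hd_facts α hα).1
    rw [ae_restrict_iff' measurableSet_Ioi]
    refine ae_of_all _ fun ξ hξ => ?_
    rw [norm_mul, norm_eph, one_mul, Complex.norm_real, Real.norm_eq_abs,
      abs_of_nonpos (hd_nonpos α hα (le_of_lt hξ))]
  have hnormc : ‖(Complex.I * ((μ ^ (1 + 1/α) : ℝ) : ℂ))⁻¹‖ = (μ ^ (1 + 1/α))⁻¹ := by
    rw [norm_inv, norm_mul, Complex.norm_I, one_mul, Complex.norm_real, Real.norm_eq_abs,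
      abs_of_pos hlampos]
  have h1 : ‖(((2*α)⁻¹ : ℝ) : ℂ) + ∫ ξ in Set.Ioi (1:ℝ), eph α μ ξ * ((hd α ξ : ℝ) : ℂ)‖ ≤
      (2*α)⁻¹ + (2*α)⁻¹ := by
    refine (norm_add_le _ _).trans ?_
    rw [Complex.norm_real, Real.norm_eq_abs, abs_of_pos (by positivity)]
    linarith [hJ]
  have hexp : (μ ^ (1 + 1/α))⁻¹ = μ ^ (-1 - 1/α : ℝ) := by
    rw [← Real.rpow_neg (by linarith : (0:ℝ) ≤ μ)]
    congr 1; ring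
  have hsum : (2*α)⁻¹ + (2*α)⁻¹ = α⁻¹ := by
    field_simp
    norm_num
  calc ‖gfun α μ‖ = (μ ^ (1 + 1/α))⁻¹ *
        ‖(((2*α)⁻¹ : ℝ) : ℂ) + ∫ ξ in Set.Ioi (1:ℝ), eph α μ ξ * ((hd α ξ : ℝ) : ℂ)‖ := by
        rw [gfun, norm_mul, norm_neg, hnormc]
    _ ≤ (μ ^ (1 + 1/α))⁻¹ * ((2*α)⁻¹ + (2*α)⁻¹) :=
        mul_le_mul_of_nonneg_left h1 (inv_nonneg.2 hlampos.le)
    _ = α⁻¹ * μ ^ (-1 - 1/α : ℝ) := by rw [hsum, hexp, mul_comm]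

lemma continuousOn_gfun (α : ℝ) (hα : 0 < α) : ContinuousOn (gfun α) (Set.Ici 1) := by
  have hc1 : ContinuousOn (fun μ : ℝ => μ ^ (1 + 1/α)) (Set.Ici 1) := fun μ hμ =>
    (Real.continuousAt_rpow_const μ _ (Or.inl (by
      have : (1:ℝ) ≤ μ := hμ; intro h; rw [h] at this; linarith))).continuousWithinAt
  have hc2 : ContinuousOn (fun μ : ℝ => -(Complex.I * ((μ ^ (1 + 1/α) : ℝ) : ℂ))⁻¹)
      (Set.Ici 1) := by
    apply ContinuousOn.neg
    apply ContinuousOn.inv₀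
    · exact continuousOn_const.mul (Complex.continuous_ofReal.comp_continuousOn hc1)
    · intro μ hμ
      have : (1:ℝ) ≤ μ := hμ
      exact mul_ne_zero Complex.I_ne_zero
        (by exact_mod_cast (Real.rpow_pos_of_pos (by linarith) _).ne')
  have hJ : ContinuousOn
      (fun μ : ℝ => ∫ ξ in Set.Ioi (1:ℝ), eph α μ ξ * ((hd α ξ : ℝ) : ℂ)) (Set.Ici 1) := by
    apply continuousOn_of_dominated (bound := fun ξ => -hd α ξ)
    · exact fun μ _ => (integrableOn_eph_hd α μ hα).aestronglyMeasurable
    · intro μ _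
      rw [ae_restrict_iff' measurableSet_Ioi]
      refine ae_of_all _ fun ξ hξ => ?_
      rw [norm_mul, norm_eph, one_mul, Complex.norm_real, Real.norm_eq_abs,
        abs_of_nonpos (hd_nonpos α hα (le_of_lt hξ))]
    · exact (neg_hd_facts α hα).1
    · refine ae_of_all _ fun ξ => ?_
      apply ContinuousOn.mul _ continuousOn_const
      exact (continuousOn_const.mul (Complex.continuous_ofReal.comp_continuousOn
        (hc1.mul continuousOn_const))).cexp
  exact hc2.mul (continuousOn_const.add hJ)

end Main


/-- For `α > 0`, there is `C > 0` such that for every `μ ≥ 1` the improper Riemann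
integral `lim_{R→∞} ∫_1^R e^{iμ^{1+1/α} φ_α(ξ)} dξ` exists and its absolute value is at
most `C μ^{-1-1/α}`; moreover the limit is a continuous function of `μ` on `[1, ∞)`. -/
theorem far_field_decay (α : ℝ) (hα : 0 < α) :
    ∃ C : ℝ, 0 < C ∧
      ∃ g : ℝ → ℂ,
        (∀ μ : ℝ, 1 ≤ μ →
          Tendsto
            (fun R : ℝ => ∫ ξ in (1 : ℝ)..R,
              Complex.exp (Complex.I * ((μ ^ (1 + 1 / α) * phase α ξ : ℝ) : ℂ)))
            atTop (nhds (g μ))) ∧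
        (∀ μ : ℝ, 1 ≤ μ → ‖g μ‖ ≤ C * μ ^ (-1 - 1 / α : ℝ)) ∧
        ContinuousOn g (Set.Ici (1 : ℝ)) := by
  
  exact ⟨α⁻¹, by positivity, Main.gfun α, fun μ hμ => Main.tendsto_gfun α μ hα hμ,
    fun μ hμ => Main.norm_gfun_le α μ hα hμ, Main.continuousOn_gfun α hα⟩
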